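/- Let f ∈ W^{1,2}(ℝ²). Then e^f − 1 ∈ L²(ℝ²). More precisely, using the expansion (e^f − 1)² = f² + Σ_{s≥3} ((2^s − 2)/s!) f^s and the embedding ‖f‖_{L^p(ℝ²)} ≤ (π(p/2 − 1))^{(p−2)/(2p)} ‖f‖_{W^{1,2}(ℝ²)} for p > 2, the L² norm of e^f − 1 is bounded by a quantity depending only on ‖f‖_{W^{1,2}(ℝ²)}. -/

import Mathlib

open MeasureTheory Real

/-- The square of the `W^{1,2}(ℝ²)` norm of `f`. -/
noncomputable def sobNormSq (f : EuclideanSpace ℝ (Fin 2) → ℝ) : ℝ :=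
  (∫ x, (f x) ^ 2) + ∫ x, ‖fderiv ℝ f x‖ ^ 2

open Nat
open scoped ENNReal NNReal

lemma exp_tsum (x : ℝ) : Real.exp x = ∑' n : ℕ, x ^ n / n ! := by
  rw [Real.exp_eq_exp_ℝ, NormedSpace.exp_eq_tsum_div]

lemma tsum_shift2 (x : ℝ) :
    ∑' s : ℕ, x ^ (s + 2) / ((s + 2)! : ℝ) = Real.exp x - 1 - x := by
  have h := Real.summable_pow_div_factorial x
  have h2 := Summable.sum_add_tsum_nat_add 2 h
  rw [exp_tsum x, ← h2]
  simp [Finset.sum_range_succ]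
  ring

lemma pointwise_real (t : ℝ) :
    (Real.exp t - 1) ^ 2 ≤ ∑' s : ℕ, 2 ^ (s + 2) * |t| ^ (s + 2) / ((s + 2)! : ℝ) := by
  have hs : ∀ s : ℕ, (2 * |t|) ^ (s + 2) / ((s + 2)! : ℝ) = 2 ^ (s + 2) * |t| ^ (s + 2) / ((s + 2)! : ℝ) := by
    intro s; rw [mul_pow]
  rw [← tsum_congr hs, tsum_shift2 (2 * |t|)]
  have hE : Real.exp (2 * |t|) = Real.exp |t| ^ 2 := by
    rw [two_mul, Real.exp_add]; ring
  have h1 : 1 + |t| ≤ Real.exp |t| := by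
    have := Real.add_one_le_exp |t|; linarith
  have habs : (Real.exp t - 1) ^ 2 ≤ (Real.exp |t| - 1) ^ 2 := by
    have hup : Real.exp t - 1 ≤ Real.exp |t| - 1 := by
      have := Real.exp_le_exp.2 (le_abs_self t); linarith
    have hlo : -(Real.exp |t| - 1) ≤ Real.exp t - 1 := by
      have hcosh := Real.one_le_cosh t
      rw [Real.cosh_eq] at hcosh
      have h2 : Real.exp (-t) ≤ Real.exp |t| := Real.exp_le_exp.2 (neg_le_abs t)
      linarith
    exact sq_le_sq' hlo hup
  nlinarith [Real.exp_pos |t|]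

noncomputable def bb (M : ℝ) (s : ℕ) : ℝ :=
  2 ^ (s + 3) / ((s + 3)! : ℝ) *
    ((π * (((s : ℝ) + 3) / 2 - 1)) ^ ((((s : ℝ) + 3) - 2) / (2 * ((s : ℝ) + 3))) * M) ^ (s + 3)

lemma nat_pow_le (q : ℕ) : (q : ℝ) ^ q ≤ 4 ^ q * (q ! : ℝ) := by
  have hq : (q : ℝ) ^ q / (q ! : ℝ) ≤ Real.exp q := by
    calc (q : ℝ) ^ q / (q ! : ℝ) ≤ ∑ i ∈ Finset.range (q + 1), (q : ℝ) ^ i / (i ! : ℝ) := by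
          refine Finset.single_le_sum (f := fun i => (q : ℝ) ^ i / (i ! : ℝ)) ?_ ?_
          · intro i _; positivity
          · simp
      _ ≤ Real.exp q := Real.sum_le_exp_of_nonneg (by positivity) _
  have he : Real.exp q ≤ 4 ^ q := by
    have h1 : Real.exp (q : ℝ) = Real.exp 1 ^ q := by
      rw [← Real.exp_nat_mul]; norm_num
    have h4 : Real.exp 1 ≤ 4 := by
      have := Real.exp_one_lt_d9; linarith
    rw [h1]
    exact pow_le_pow_left₀ (Real.exp_pos 1).le h4 q
  have hfac : (0:ℝ) < (q ! : ℝ) := by positivity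
  calc (q:ℝ) ^ q = (q:ℝ)^q / (q ! : ℝ) * (q ! : ℝ) := by field_simp
    _ ≤ Real.exp q * (q ! : ℝ) := by exact mul_le_mul_of_nonneg_right hq hfac.le
    _ ≤ 4 ^ q * (q ! : ℝ) := mul_le_mul_of_nonneg_right he hfac.le

lemma bb_nonneg (M : ℝ) (hM : 0 ≤ M) (s : ℕ) : 0 ≤ bb M s := by
  unfold bb
  have h1 : (0:ℝ) ≤ (π * (((s : ℝ) + 3) / 2 - 1)) ^ ((((s : ℝ) + 3) - 2) / (2 * ((s : ℝ) + 3))) := by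
    apply Real.rpow_nonneg
    have := Real.pi_gt_three
    have hs0 : (0:ℝ) ≤ (s:ℝ) := Nat.cast_nonneg s
    nlinarith
  positivity

lemma bb_le (M : ℝ) (hM : 0 ≤ M) (s : ℕ) :
    bb M s ≤ ((32 * π * M ^ 2) ^ (s + 3) / ((s + 3)! : ℝ) + (1/2 : ℝ) ^ (s + 3)) / 2 := by
  set q : ℕ := s + 3 with hq
  set qr : ℝ := (s : ℝ) + 3 with hqr
  clear_value q qr
  have hqrpos : (0:ℝ) < qr := by rw [hqr]; positivity
  have hqcast : (q : ℝ) = qr := by push_cast [hq, hqr]; ring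
  have hpi := Real.pi_gt_three
  set X : ℝ := π * (qr / 2 - 1) with hX
  have hX1 : 1 ≤ X := by
    have hs0 : (0:ℝ) ≤ (s:ℝ) := Nat.cast_nonneg s
    rw [hX, hqr]; nlinarith
  have hX0 : 0 ≤ X := by linarith
  -- C^q = X ^ ((qr - 2)/2)
  have hCq : (X ^ ((qr - 2) / (2 * qr))) ^ q = X ^ ((qr - 2) / 2) := by
    rw [← Real.rpow_natCast (X ^ ((qr - 2) / (2 * qr))) q, ← Real.rpow_mul hX0, hqcast]
    congr 1
    field_simp
  have hC2 : X ^ ((qr - 2) / 2) ≤ (π * qr) ^ (qr / 2) := by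
    calc X ^ ((qr - 2) / 2) ≤ X ^ (qr / 2) :=
          Real.rpow_le_rpow_of_exponent_le hX1 (by linarith)
      _ ≤ (π * qr) ^ (qr / 2) := by
          apply Real.rpow_le_rpow hX0 ?_ (by linarith)
          rw [hX]; nlinarith
  have hC3 : (π * qr) ^ (qr / 2) = Real.sqrt ((π * qr) ^ q) := by
    rw [Real.sqrt_eq_rpow, ← Real.rpow_natCast (π * qr) q, ← Real.rpow_mul (by positivity), hqcast]
    congr 1; ring
  -- now the AM-GM step
  set u : ℝ := Real.sqrt (qr ^ q * π ^ q * 2 ^ q) * ((2 * M) ^ q / (q ! : ℝ)) with hu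
  set v : ℝ := Real.sqrt ((1/2 : ℝ) ^ q) with hv
  have huv : bb M s ≤ u * v := by
    have : bb M s = 2 ^ q / (q ! : ℝ) * ((X ^ ((qr - 2) / (2 * qr))) * M) ^ q := by
      rw [bb, hX, hqr, hq]
    rw [this, mul_pow, hCq]
    have hone : (2:ℝ) ^ q * (1/2 : ℝ) ^ q = 1 := by
      rw [← mul_pow]; norm_num
    have hsplit : u * v = Real.sqrt (qr ^ q * π ^ q) * ((2 * M) ^ q / (q ! : ℝ)) := by
      rw [hu, hv, mul_right_comm, ← Real.sqrt_mul (by positivity),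
        mul_assoc (qr ^ q * π ^ q), hone, mul_one]
    rw [hsplit]
    have h1 : X ^ ((qr - 2) / 2) * M ^ q ≤ Real.sqrt (qr ^ q * π ^ q) * M ^ q := by
      apply mul_le_mul_of_nonneg_right _ (by positivity)
      calc X ^ ((qr - 2) / 2) ≤ (π * qr) ^ (qr / 2) := hC2
        _ = Real.sqrt ((π * qr) ^ q) := hC3
        _ = Real.sqrt (qr ^ q * π ^ q) := by rw [mul_pow, mul_comm]
    calc 2 ^ q / (q ! : ℝ) * (X ^ ((qr - 2) / 2) * M ^ q)
        ≤ 2 ^ q / (q ! : ℝ) * (Real.sqrt (qr ^ q * π ^ q) * M ^ q) := by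
          apply mul_le_mul_of_nonneg_left h1 (by positivity)
      _ = Real.sqrt (qr ^ q * π ^ q) * ((2 * M) ^ q / (q ! : ℝ)) := by
          rw [mul_pow]; ring
  have hu2 : u ^ 2 ≤ (32 * π * M ^ 2) ^ q / (q ! : ℝ) := by
    rw [hu, mul_pow, Real.sq_sqrt (by positivity)]
    have hqq : qr ^ q ≤ 4 ^ q * (q ! : ℝ) := by
      rw [← hqcast]; exact nat_pow_le q
    calc qr ^ q * π ^ q * 2 ^ q * ((2 * M) ^ q / (q ! : ℝ)) ^ 2
        ≤ 4 ^ q * (q ! : ℝ) * π ^ q * 2 ^ q * ((2 * M) ^ q / (q ! : ℝ)) ^ 2 := by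
          apply mul_le_mul_of_nonneg_right _ (by positivity)
          apply mul_le_mul_of_nonneg_right _ (by positivity)
          exact mul_le_mul_of_nonneg_right hqq (by positivity)
      _ = (32 * π * M ^ 2) ^ q / (q ! : ℝ) := by
          have hfac : (0:ℝ) < (q ! : ℝ) := by positivity
          have hpow : ((2 * M : ℝ) ^ q) ^ 2 = ((2 * M) ^ 2) ^ q := by
            rw [← pow_mul, ← pow_mul, mul_comm q 2]
          have hexp : (32 * π * M ^ 2 : ℝ) ^ q = 4 ^ q * π ^ q * 2 ^ q * ((2 * M) ^ q) ^ 2 := by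
            rw [hpow, ← mul_pow, ← mul_pow, ← mul_pow]
            congr 1; ring
          rw [div_pow, hexp]
          field_simp
  have hv2 : v ^ 2 = (1/2 : ℝ) ^ q := Real.sq_sqrt (by positivity)
  have hamgm : u * v ≤ (u ^ 2 + v ^ 2) / 2 := by nlinarith [sq_nonneg (u - v)]
  calc bb M s ≤ u * v := huv
    _ ≤ (u ^ 2 + v ^ 2) / 2 := hamgm
    _ ≤ ((32 * π * M ^ 2) ^ q / (q ! : ℝ) + (1/2 : ℝ) ^ q) / 2 := by
        rw [hv2]; linarith

lemma bb_summable (M : ℝ) (hM : 0 ≤ M) : Summable (bb M) := by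
  apply Summable.of_nonneg_of_le (bb_nonneg M hM) (bb_le M hM)
  apply Summable.div_const
  apply Summable.add
  · exact ((summable_nat_add_iff 3).mpr (Real.summable_pow_div_factorial (32 * π * M ^ 2)))
  · exact ((summable_nat_add_iff 3).mpr (summable_geometric_of_lt_one (by norm_num) (by norm_num)))

lemma coef_summable (t : ℝ) :
    Summable (fun s : ℕ => 2 ^ (s + 2) * |t| ^ (s + 2) / ((s + 2)! : ℝ)) := by
  have h := (summable_nat_add_iff 2).mpr (Real.summable_pow_div_factorial (2 * |t|))
  refine h.congr fun s => ?_
  rw [mul_pow]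

lemma pointwise_ennreal (t : ℝ) :
    (‖Real.exp t - 1‖₊ : ℝ≥0∞) ^ (2 : ℝ) ≤
      ∑' s : ℕ, ENNReal.ofReal (2 ^ (s + 2) / ((s + 2)! : ℝ)) * ENNReal.ofReal |t| ^ (s + 2) := by
  have h1 : (‖Real.exp t - 1‖₊ : ℝ≥0∞) ^ (2 : ℝ) = ENNReal.ofReal ((Real.exp t - 1) ^ 2) := by
    rw [← enorm_eq_nnnorm, ← ofReal_norm, ENNReal.ofReal_rpow_of_nonneg (norm_nonneg _) (by norm_num)]
    congr 1
    rw [Real.norm_eq_abs, show (2:ℝ) = ((2:ℕ):ℝ) by norm_num, Real.rpow_natCast, sq_abs]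
  rw [h1]
  calc ENNReal.ofReal ((Real.exp t - 1) ^ 2)
      ≤ ENNReal.ofReal (∑' s : ℕ, 2 ^ (s + 2) * |t| ^ (s + 2) / ((s + 2)! : ℝ)) :=
        ENNReal.ofReal_le_ofReal (pointwise_real t)
    _ = ∑' s : ℕ, ENNReal.ofReal (2 ^ (s + 2) * |t| ^ (s + 2) / ((s + 2)! : ℝ)) :=
        ENNReal.ofReal_tsum_of_nonneg (fun s => by positivity) (coef_summable t)
    _ = ∑' s : ℕ, ENNReal.ofReal (2 ^ (s + 2) / ((s + 2)! : ℝ)) * ENNReal.ofReal |t| ^ (s + 2) := by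
        refine tsum_congr fun s => ?_
        rw [← ENNReal.ofReal_pow (abs_nonneg t), ← ENNReal.ofReal_mul (by positivity)]
        congr 1
        ring

noncomputable def Bfun (M : ℝ) : ℝ := Real.sqrt (2 * M ^ 2 + ∑' s : ℕ, bb M s)

set_option maxHeartbeats 1000000 in
theorem stmt6 :
    ∃ B : ℝ → ℝ, ∀ f : EuclideanSpace ℝ (Fin 2) → ℝ,
      MemLp f 2 volume → Differentiable ℝ f →
      MemLp (fun x => ‖fderiv ℝ f x‖) 2 volume →
      (∀ p : ℝ, 2 < p →
        eLpNorm f (ENNReal.ofReal p) volume ≤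
          ENNReal.ofReal ((π * (p / 2 - 1)) ^ ((p - 2) / (2 * p)) *
            Real.sqrt (sobNormSq f))) →
      MemLp (fun x => Real.exp (f x) - 1) 2 volume ∧
      eLpNorm (fun x => Real.exp (f x) - 1) 2 volume ≤
        ENNReal.ofReal (B (Real.sqrt (sobNormSq f))) := by
  refine ⟨Bfun, fun f hf2 hdiff hgrad h4 => ?_⟩
  set M : ℝ := Real.sqrt (sobNormSq f) with hMdef
  have hM : 0 ≤ M := Real.sqrt_nonneg _
  have hcont : Continuous f := hdiff.continuous
  set g : EuclideanSpace ℝ (Fin 2) → ℝ := fun x => Real.exp (f x) - 1 with hgdef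
  have hgcont : Continuous g := (Real.continuous_exp.comp hcont).sub continuous_const
  -- the L² integral of f
  have hsob_nonneg : 0 ≤ sobNormSq f := by
    unfold sobNormSq
    have h1 : 0 ≤ ∫ x, (f x) ^ 2 := integral_nonneg fun x => sq_nonneg _
    have h2 : 0 ≤ ∫ x, ‖fderiv ℝ f x‖ ^ 2 := integral_nonneg fun x => sq_nonneg _
    linarith
  have hM2 : M ^ 2 = sobNormSq f := Real.sq_sqrt hsob_nonneg
  have hIf2 : ∫ x, (f x) ^ 2 ≤ M ^ 2 := by
    rw [hM2]
    unfold sobNormSq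
    have h2 : 0 ≤ ∫ x, ‖fderiv ℝ f x‖ ^ 2 := integral_nonneg fun x => sq_nonneg _
    linarith
  -- I2 : the squared lintegral bound
  have hI2 : ∫⁻ x, (ENNReal.ofReal |f x|) ^ (2 : ℕ) ≤ ENNReal.ofReal (M ^ 2) := by
    have heq : ∀ x, (ENNReal.ofReal |f x|) ^ (2 : ℕ) = ENNReal.ofReal ((f x) ^ 2) := fun x => by
      rw [← ENNReal.ofReal_pow (abs_nonneg _), sq_abs]
    simp_rw [heq]
    rw [← ofReal_integral_eq_lintegral_ofReal hf2.integrable_sq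
      (Filter.Eventually.of_forall fun x => sq_nonneg _)]
    exact ENNReal.ofReal_le_ofReal hIf2
  -- Iq : the higher power bounds
  have hIq : ∀ s : ℕ, ∫⁻ x, (ENNReal.ofReal |f x|) ^ (s + 3 : ℕ) ≤
      ENNReal.ofReal (((π * (((s : ℝ) + 3) / 2 - 1)) ^
        ((((s : ℝ) + 3) - 2) / (2 * ((s : ℝ) + 3))) * M) ^ (s + 3)) := by
    intro s
    set p : ℝ := (s : ℝ) + 3 with hpdef
    have hp0 : (0 : ℝ) < p := by positivity
    have hp2 : (2 : ℝ) < p := by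
      have : (0:ℝ) ≤ (s:ℝ) := Nat.cast_nonneg s
      linarith
    have h := h4 p hp2
    rw [eLpNorm_eq_lintegral_rpow_enorm_toReal (by simp [hp0]) ENNReal.ofReal_ne_top] at h
    rw [ENNReal.toReal_ofReal hp0.le] at h
    have h' := ENNReal.rpow_le_rpow h hp0.le
    rw [← ENNReal.rpow_mul, one_div_mul_cancel hp0.ne', ENNReal.rpow_one] at h'
    have hC : 0 ≤ (π * (p / 2 - 1)) ^ ((p - 2) / (2 * p)) * M := by
      apply mul_nonneg _ hM
      apply Real.rpow_nonneg
      have := Real.pi_gt_three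
      nlinarith
    calc ∫⁻ x, (ENNReal.ofReal |f x|) ^ (s + 3 : ℕ)
        = ∫⁻ x, (‖f x‖₊ : ℝ≥0∞) ^ (p : ℝ) := by
          refine lintegral_congr fun x => ?_
          rw [← enorm_eq_nnnorm, ← ofReal_norm, Real.norm_eq_abs,
            show (p : ℝ) = ((s + 3 : ℕ) : ℝ) by push_cast [hpdef]; ring,
            ENNReal.rpow_natCast]
      _ ≤ ENNReal.ofReal ((π * (p / 2 - 1)) ^ ((p - 2) / (2 * p)) * M) ^ (p : ℝ) := h'
      _ = ENNReal.ofReal (((π * (p / 2 - 1)) ^ ((p - 2) / (2 * p)) * M) ^ (s + 3)) := by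
          rw [show (p : ℝ) = ((s + 3 : ℕ) : ℝ) by push_cast [hpdef]; ring,
            ENNReal.rpow_natCast, ← ENNReal.ofReal_pow (by push_cast at hC ⊢; exact hC)]
  -- main estimate
  set T : ℕ → ℝ≥0∞ := fun s => ENNReal.ofReal (2 ^ (s + 2) / ((s + 2)! : ℝ)) *
      ∫⁻ x, ENNReal.ofReal |f x| ^ (s + 2) with hTdef
  have step1 : ∫⁻ x, (‖g x‖₊ : ℝ≥0∞) ^ (2 : ℝ) ≤ ∑' s : ℕ, T s := by
    have hmeas : ∀ s : ℕ, AEMeasurable (fun x =>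
        ENNReal.ofReal (2 ^ (s + 2) / ((s + 2)! : ℝ)) * ENNReal.ofReal |f x| ^ (s + 2)) volume :=
      fun s => (((hcont.measurable.abs.ennreal_ofReal).pow_const _).const_mul _).aemeasurable
    calc ∫⁻ x, (‖g x‖₊ : ℝ≥0∞) ^ (2 : ℝ)
        ≤ ∫⁻ x, ∑' s : ℕ, ENNReal.ofReal (2 ^ (s + 2) / ((s + 2)! : ℝ)) *
            ENNReal.ofReal |f x| ^ (s + 2) := lintegral_mono fun x => pointwise_ennreal (f x)
      _ = ∑' s : ℕ, ∫⁻ x, ENNReal.ofReal (2 ^ (s + 2) / ((s + 2)! : ℝ)) *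
            ENNReal.ofReal |f x| ^ (s + 2) := lintegral_tsum hmeas
      _ = ∑' s : ℕ, T s :=
          tsum_congr fun s => lintegral_const_mul' _ _ ENNReal.ofReal_ne_top
  have step2 : ∑' s : ℕ, T s = T 0 + ∑' s : ℕ, T (s + 1) := tsum_eq_zero_add' ENNReal.summable
  have step3 : T 0 ≤ ENNReal.ofReal (2 * M ^ 2) := by
    have hT0 : T 0 = ENNReal.ofReal 2 * ∫⁻ x, ENNReal.ofReal |f x| ^ 2 := by
      simp only [hTdef]
      norm_num [Nat.factorial]
    rw [hT0]
    calc ENNReal.ofReal 2 * ∫⁻ x, ENNReal.ofReal |f x| ^ 2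
        ≤ ENNReal.ofReal 2 * ENNReal.ofReal (M ^ 2) := by gcongr
      _ = ENNReal.ofReal (2 * M ^ 2) := by rw [← ENNReal.ofReal_mul (by norm_num)]
  have step4 : ∀ s : ℕ, T (s + 1) ≤ ENNReal.ofReal (bb M s) := by
    intro s
    have hcoef : (0:ℝ) ≤ 2 ^ (s + 3) / ((s + 3)! : ℝ) := by positivity
    have hT1 : T (s + 1) = ENNReal.ofReal (2 ^ (s + 3) / ((s + 3)! : ℝ)) *
        ∫⁻ x, ENNReal.ofReal |f x| ^ (s + 3) := by
      simp only [hTdef, show s + 1 + 2 = s + 3 from by omega]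
    rw [hT1, bb, ENNReal.ofReal_mul hcoef]
    gcongr
    exact hIq s
  have key : ∫⁻ x, (‖g x‖₊ : ℝ≥0∞) ^ (2 : ℝ) ≤
      ENNReal.ofReal (2 * M ^ 2 + ∑' s : ℕ, bb M s) := by
    calc ∫⁻ x, (‖g x‖₊ : ℝ≥0∞) ^ (2 : ℝ) ≤ ∑' s : ℕ, T s := step1
      _ = T 0 + ∑' s : ℕ, T (s + 1) := step2
      _ ≤ ENNReal.ofReal (2 * M ^ 2) + ∑' s : ℕ, ENNReal.ofReal (bb M s) :=
          add_le_add step3 (ENNReal.tsum_le_tsum step4)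
      _ = ENNReal.ofReal (2 * M ^ 2) + ENNReal.ofReal (∑' s : ℕ, bb M s) := by
          rw [ENNReal.ofReal_tsum_of_nonneg (bb_nonneg M hM) (bb_summable M hM)]
      _ = ENNReal.ofReal (2 * M ^ 2 + ∑' s : ℕ, bb M s) := by
          rw [← ENNReal.ofReal_add (by positivity) (tsum_nonneg (bb_nonneg M hM))]
  -- conclude
  have hS : 0 ≤ 2 * M ^ 2 + ∑' s : ℕ, bb M s :=
    add_nonneg (by positivity) (tsum_nonneg (bb_nonneg M hM))
  have hfinal : eLpNorm g 2 volume ≤ ENNReal.ofReal (Bfun M) := by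
    rw [eLpNorm_eq_lintegral_rpow_enorm_toReal two_ne_zero ENNReal.ofNat_ne_top]
    have h2r : ((2 : ℝ≥0∞).toReal) = (2 : ℝ) := by norm_num
    rw [h2r]
    calc (∫⁻ x, (‖g x‖₊ : ℝ≥0∞) ^ (2 : ℝ)) ^ (1 / (2:ℝ))
        ≤ (ENNReal.ofReal (2 * M ^ 2 + ∑' s : ℕ, bb M s)) ^ (1 / (2:ℝ)) :=
          ENNReal.rpow_le_rpow key (by norm_num)
      _ = ENNReal.ofReal ((2 * M ^ 2 + ∑' s : ℕ, bb M s) ^ (1 / (2:ℝ))) :=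
          ENNReal.ofReal_rpow_of_nonneg hS (by norm_num)
      _ = ENNReal.ofReal (Bfun M) := by rw [Bfun, Real.sqrt_eq_rpow]
  refine ⟨⟨hgcont.aestronglyMeasurable, ?_⟩, hfinal⟩
  exact lt_of_le_of_lt hfinal ENNReal.ofReal_lt_top
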